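/- Let 1 ≤ M ≤ N, let Ω_N ⊆ ℂ^N and Ω_M ⊆ ℂ^M be open sets, and let f : Ω_N → Ω_M be given by f(z) = cAz + w_0, where c ∈ ℝ, w_0 ∈ ℂ^M and A is an M×N homothety-projection matrix. Then for every harmonic function h : Ω_M → ℝ, the composition h∘f : Ω_N → ℝ is harmonic. (Theorem B, implication (3)⇒(2).) -/

import Mathlib

/-- The Laplacian of `h : ℂ^m → ℝ` at `w`: the trace of the second real Fréchet
derivative with respect to the orthonormal ℝ-basis `e_1, i·e_1, …, e_m, i·e_m`. -/
noncomputable def laplacian {m : ℕ} (h : (Fin m → ℂ) → ℝ) (w : Fin m → ℂ) : ℝ :=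
  ∑ j : Fin m, (fderiv ℝ (fderiv ℝ h) w (Pi.single j 1) (Pi.single j 1)
    + fderiv ℝ (fderiv ℝ h) w (Pi.single j Complex.I) (Pi.single j Complex.I))

/-- `h` is harmonic on `Ω ⊆ ℂ^m`: C² with vanishing Laplacian. -/
def HarmonicOn {m : ℕ} (Ω : Set (Fin m → ℂ)) (h : (Fin m → ℂ) → ℝ) : Prop :=
  ContDiffOn ℝ 2 h Ω ∧ ∀ w ∈ Ω, laplacian h w = 0

/-- An `M × N` complex matrix is a homothety-projection matrix if its rows are pairwise
orthogonal and all have the same Euclidean norm. -/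
def IsHomothetyProjection {M N : ℕ} (A : Matrix (Fin M) (Fin N) ℂ) : Prop :=
  (∀ j k, j ≠ k → ∑ i, A j i * (starRingEnd ℂ) (A k i) = 0) ∧
  ∀ j k, ∑ i, ‖A j i‖ ^ 2 = ∑ i, ‖A k i‖ ^ 2

/-- Every `w : Fin M → ℂ` is a real-linear combination of the standard basis vectors
`e_p` and `i·e_p`. -/
lemma decomp_aux {M : ℕ} (w : Fin M → ℂ) :
    w = ∑ p, ((w p).re • (Pi.single p 1 : Fin M → ℂ)
      + (w p).im • (Pi.single p Complex.I : Fin M → ℂ)) := by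
  funext q
  simp only [Finset.sum_apply, Pi.add_apply, Pi.smul_apply, Pi.single_apply,
    smul_ite, smul_zero, Finset.sum_add_distrib, Finset.sum_ite_eq', Finset.mem_univ, if_true]
  simp [Complex.real_smul]

/-- Expansion of a continuous real-bilinear form on `ℂ^M` in the real basis. -/
lemma Bexpand_aux {M : ℕ} (B : (Fin M → ℂ) →L[ℝ] (Fin M → ℂ) →L[ℝ] ℝ) (w w' : Fin M → ℂ) :
    B w w' = ∑ p, ∑ q,
      ((w p).re * (w' q).re * B (Pi.single p 1) (Pi.single q 1)
      + (w p).re * (w' q).im * B (Pi.single p 1) (Pi.single q Complex.I)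
      + (w p).im * (w' q).re * B (Pi.single p Complex.I) (Pi.single q 1)
      + (w p).im * (w' q).im * B (Pi.single p Complex.I) (Pi.single q Complex.I)) := by
  conv_lhs => rw [decomp_aux w, decomp_aux w']
  simp only [map_sum, map_add, map_smul, ContinuousLinearMap.coe_sum', Finset.sum_apply,
    ContinuousLinearMap.add_apply, ContinuousLinearMap.coe_smul', Pi.smul_apply,
    ContinuousLinearMap.coe_add', Pi.add_apply, smul_eq_mul, Finset.mul_sum,
    ← Finset.sum_add_distrib]
  rw [Finset.sum_comm]
  refine Finset.sum_congr rfl fun p _ => Finset.sum_congr rfl fun q _ => by ring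

/-- The per-`(p,q,j)` term in the expansion of the pulled-back Laplacian. -/
noncomputable def Gaux {M N : ℕ} (A : Matrix (Fin M) (Fin N) ℂ) (c : ℝ)
    (B : (Fin M → ℂ) →L[ℝ] (Fin M → ℂ) →L[ℝ] ℝ) (p q : Fin M) (j : Fin N) : ℝ :=
  ((c:ℂ) * A p j).re * ((c:ℂ) * A q j).re * B (Pi.single p 1) (Pi.single q 1)
  + ((c:ℂ) * A p j).re * ((c:ℂ) * A q j).im * B (Pi.single p 1) (Pi.single q Complex.I)
  + ((c:ℂ) * A p j).im * ((c:ℂ) * A q j).re * B (Pi.single p Complex.I) (Pi.single q 1)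
  + ((c:ℂ) * A p j).im * ((c:ℂ) * A q j).im * B (Pi.single p Complex.I) (Pi.single q Complex.I)
  + ((c:ℂ) * A p j * Complex.I).re * ((c:ℂ) * A q j * Complex.I).re
      * B (Pi.single p 1) (Pi.single q 1)
  + ((c:ℂ) * A p j * Complex.I).re * ((c:ℂ) * A q j * Complex.I).im
      * B (Pi.single p 1) (Pi.single q Complex.I)
  + ((c:ℂ) * A p j * Complex.I).im * ((c:ℂ) * A q j * Complex.I).re
      * B (Pi.single p Complex.I) (Pi.single q 1)
  + ((c:ℂ) * A p j * Complex.I).im * ((c:ℂ) * A q j * Complex.I).im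
      * B (Pi.single p Complex.I) (Pi.single q Complex.I)

/-- Key algebraic identity: summing a bilinear form over the images of the real basis of
`ℂ^N` under a homothety-projection map gives a multiple of its trace on `ℂ^M`. -/
lemma key_sum {M N : ℕ} (hM : 1 ≤ M) (A : Matrix (Fin M) (Fin N) ℂ)
    (hA : IsHomothetyProjection A) (c : ℝ)
    (B : (Fin M → ℂ) →L[ℝ] (Fin M → ℂ) →L[ℝ] ℝ) :
    ∑ j : Fin N, (B (fun p => (c:ℂ) * A p j) (fun p => (c:ℂ) * A p j)
      + B (fun p => (c:ℂ) * A p j * Complex.I) (fun p => (c:ℂ) * A p j * Complex.I))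
    = (c^2 * ∑ i, ‖A ⟨0, hM⟩ i‖^2) *
      ∑ p, (B (Pi.single p 1) (Pi.single p 1)
        + B (Pi.single p Complex.I) (Pi.single p Complex.I)) := by
  have hre : ∀ p q : Fin M, ∑ j, ((A p j).re * (A q j).re + (A p j).im * (A q j).im)
      = (∑ j, A p j * (starRingEnd ℂ) (A q j)).re := by
    intro p q
    rw [Complex.re_sum]
    exact Finset.sum_congr rfl fun j _ => by simp [Complex.mul_re]
  have him : ∀ p q : Fin M, ∑ j, ((A p j).im * (A q j).re - (A p j).re * (A q j).im)
      = (∑ j, A p j * (starRingEnd ℂ) (A q j)).im := by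
    intro p q
    rw [Complex.im_sum]
    exact Finset.sum_congr rfl fun j _ => by simp [Complex.mul_im]; ring
  have step1 : ∀ j : Fin N,
      B (fun p => (c:ℂ) * A p j) (fun p => (c:ℂ) * A p j)
        + B (fun p => (c:ℂ) * A p j * Complex.I) (fun p => (c:ℂ) * A p j * Complex.I)
      = ∑ p, ∑ q, Gaux A c B p q j := by
    intro j
    rw [Bexpand_aux B (fun p => (c:ℂ) * A p j) (fun p => (c:ℂ) * A p j),
      Bexpand_aux B (fun p => (c:ℂ) * A p j * Complex.I) (fun p => (c:ℂ) * A p j * Complex.I),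
      ← Finset.sum_add_distrib]
    refine Finset.sum_congr rfl fun p _ => ?_
    rw [← Finset.sum_add_distrib]
    refine Finset.sum_congr rfl fun q _ => ?_
    simp only [Gaux]
    ring
  have hpq : ∀ p q : Fin M, (∑ j, Gaux A c B p q j)
      = if q = p then (c^2 * ∑ i, ‖A ⟨0, hM⟩ i‖^2) *
          (B (Pi.single p 1) (Pi.single p 1)
            + B (Pi.single p Complex.I) (Pi.single p Complex.I)) else 0 := by
    intro p q
    by_cases hq : q = p
    · subst hq
      rw [if_pos rfl]
      have hterm : ∀ j, Gaux A c B q q j = ((A q j).re^2 + (A q j).im^2) *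
          (c^2 * (B (Pi.single q 1) (Pi.single q 1)
            + B (Pi.single q Complex.I) (Pi.single q Complex.I))) := by
        intro j
        simp only [Gaux, Complex.mul_re, Complex.mul_im, Complex.ofReal_re, Complex.ofReal_im,
          Complex.I_re, Complex.I_im]
        ring
      rw [Finset.sum_congr rfl fun j _ => hterm j, ← Finset.sum_mul]
      have hsq : ∑ j, ((A q j).re^2 + (A q j).im^2) = ∑ i, ‖A ⟨0, hM⟩ i‖^2 := by
        rw [← hA.2 q ⟨0, hM⟩]
        exact Finset.sum_congr rfl fun j _ => by
          rw [Complex.sq_norm, Complex.normSq_apply]; ring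
      rw [hsq]; ring
    · rw [if_neg hq]
      have hS : ∑ j, A p j * (starRingEnd ℂ) (A q j) = 0 := hA.1 p q (Ne.symm hq)
      have hsplit : ∑ j, Gaux A c B p q j
          = (∑ j, ((A p j).re * (A q j).re + (A p j).im * (A q j).im)) *
              (c^2 * (B (Pi.single p 1) (Pi.single q 1)
                + B (Pi.single p Complex.I) (Pi.single q Complex.I)))
            + (∑ j, ((A p j).im * (A q j).re - (A p j).re * (A q j).im)) *
              (c^2 * (B (Pi.single p Complex.I) (Pi.single q 1)
                - B (Pi.single p 1) (Pi.single q Complex.I))) := by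
        rw [Finset.sum_mul, Finset.sum_mul, ← Finset.sum_add_distrib]
        refine Finset.sum_congr rfl fun j _ => ?_
        simp only [Gaux, Complex.mul_re, Complex.mul_im, Complex.ofReal_re, Complex.ofReal_im,
          Complex.I_re, Complex.I_im]
        ring
      rw [hsplit, hre, him, hS]
      simp
  calc ∑ j : Fin N, (B (fun p => (c:ℂ) * A p j) (fun p => (c:ℂ) * A p j)
      + B (fun p => (c:ℂ) * A p j * Complex.I) (fun p => (c:ℂ) * A p j * Complex.I))
      = ∑ j : Fin N, ∑ p, ∑ q, Gaux A c B p q j :=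
        Finset.sum_congr rfl fun j _ => step1 j
    _ = ∑ p, ∑ j : Fin N, ∑ q, Gaux A c B p q j := Finset.sum_comm
    _ = ∑ p, ∑ q, ∑ j : Fin N, Gaux A c B p q j :=
        Finset.sum_congr rfl fun p _ => Finset.sum_comm
    _ = ∑ p, (c^2 * ∑ i, ‖A ⟨0, hM⟩ i‖^2) *
          (B (Pi.single p 1) (Pi.single p 1)
            + B (Pi.single p Complex.I) (Pi.single p Complex.I)) := by
        refine Finset.sum_congr rfl fun p _ => ?_
        simp only [hpq, Finset.sum_ite_eq', Finset.mem_univ, if_true]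
    _ = _ := by rw [← Finset.mul_sum]

/-- Theorem B, implication (3) ⇒ (2): if `f(z) = cAz + w₀` with `A` a homothety-projection
matrix, then `h ∘ f` is harmonic for every harmonic `h`. -/
theorem theoremB_3_implies_2 (N M : ℕ) (hM : 1 ≤ M) (hMN : M ≤ N)
    (ΩN : Set (Fin N → ℂ)) (ΩM : Set (Fin M → ℂ))
    (hΩN : IsOpen ΩN) (hΩM : IsOpen ΩM)
    (f : (Fin N → ℂ) → (Fin M → ℂ)) (hmaps : Set.MapsTo f ΩN ΩM)
    (c : ℝ) (w₀ : Fin M → ℂ) (A : Matrix (Fin M) (Fin N) ℂ)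
    (hA : IsHomothetyProjection A)
    (hf : ∀ z, f z = (c : ℂ) • A.mulVec z + w₀) :
    ∀ h : (Fin M → ℂ) → ℝ, HarmonicOn ΩM h → HarmonicOn ΩN (h ∘ f) := by
  rintro h ⟨hC2, hlap⟩
  set L : (Fin N → ℂ) →L[ℝ] (Fin M → ℂ) :=
    LinearMap.toContinuousLinearMap (((c:ℂ) • A.mulVecLin).restrictScalars ℝ) with hLdef
  have hLapp : ∀ z, L z = (c:ℂ) • A.mulVec z := fun z => rfl
  have hfeq : f = fun z => L z + w₀ := funext fun z => by rw [hf, hLapp]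
  have hFf : ∀ x, HasFDerivAt f L x := fun x => by
    rw [hfeq]; exact L.hasFDerivAt.add_const w₀
  have hfC : ContDiff ℝ 2 f := by rw [hfeq]; exact L.contDiff.add contDiff_const
  constructor
  · exact hC2.comp hfC.contDiffOn hmaps
  intro z hz
  have hw : f z ∈ ΩM := hmaps hz
  have key1 : ∀ x ∈ ΩN, fderiv ℝ (h ∘ f) x = (fderiv ℝ h (f x)).comp L := by
    intro x hx
    have hd : DifferentiableAt ℝ h (f x) :=
      (hC2.contDiffAt (hΩM.mem_nhds (hmaps hx))).differentiableAt two_ne_zero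
    exact (hd.hasFDerivAt.comp x (hFf x)).fderiv
  set P : ((Fin M → ℂ) →L[ℝ] ℝ) →L[ℝ] ((Fin N → ℂ) →L[ℝ] ℝ) :=
    (ContinuousLinearMap.compL ℝ (Fin N → ℂ) (Fin M → ℂ) ℝ).flip L with hPdef
  have hPapp : ∀ g : (Fin M → ℂ) →L[ℝ] ℝ, P g = g.comp L := fun g => rfl
  have hd1 : DifferentiableAt ℝ (fderiv ℝ h) (f z) :=
    ((hC2.contDiffAt (hΩM.mem_nhds hw)).fderiv_right (m := 1) (le_refl 2)).differentiableAt one_ne_zero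
  set B := fderiv ℝ (fderiv ℝ h) (f z) with hBdef
  have hg : HasFDerivAt (fun x => fderiv ℝ h (f x)) (B.comp L) z :=
    hd1.hasFDerivAt.comp z (hFf z)
  have h2 : HasFDerivAt (fun x => P (fderiv ℝ h (f x))) (P.comp (B.comp L)) z :=
    P.hasFDerivAt.comp z hg
  have hev : fderiv ℝ (h ∘ f) =ᶠ[nhds z] fun x => P (fderiv ℝ h (f x)) := by
    filter_upwards [hΩN.mem_nhds hz] with x hx
    rw [key1 x hx, hPapp]
  have hsecond : fderiv ℝ (fderiv ℝ (h ∘ f)) z = P.comp (B.comp L) := by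
    rw [hev.fderiv_eq]; exact h2.fderiv
  have happ : ∀ v u : Fin N → ℂ, (P.comp (B.comp L)) v u = B (L v) (L u) := by
    intro v u
    rw [ContinuousLinearMap.comp_apply, ContinuousLinearMap.comp_apply, hPapp]; rfl
  have hL1 : ∀ j : Fin N, L (Pi.single j 1) = fun p => (c:ℂ) * A p j := by
    intro j; funext p
    rw [hLapp]
    simp [Matrix.mulVec, dotProduct, Pi.single_apply, mul_ite, Finset.sum_ite_eq']
  have hLI : ∀ j : Fin N, L (Pi.single j Complex.I) = fun p => (c:ℂ) * A p j * Complex.I := by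
    intro j; funext p
    rw [hLapp]
    simp [Matrix.mulVec, dotProduct, Pi.single_apply, mul_ite, Finset.sum_ite_eq',
      mul_assoc]
    exact Or.inl (mul_comm _ _)
  show laplacian (h ∘ f) z = 0
  unfold laplacian
  rw [hsecond]
  simp only [happ, hL1, hLI]
  rw [key_sum hM A hA c B]
  have hlapw : ∑ p, (B (Pi.single p 1) (Pi.single p 1)
      + B (Pi.single p Complex.I) (Pi.single p Complex.I)) = laplacian h (f z) := rfl
  rw [hlapw, hlap (f z) hw, mul_zero]
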